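/- For a positive definite density matrix ρ and a unit vector φ in the support condition range of ρ, F_min(ρ, |φ⟩⟨φ|) = 1/‖ρ^{-1/2}|φ⟩‖, i.e., the maximal fidelity over reverse tests of {ρ, |φ⟩⟨φ|} equals (⟨φ|ρ^{-1}|φ⟩)^{-1/2}. -/

import Mathlib

open Matrix BigOperators
open scoped ComplexOrder Classical

noncomputable def msqrt {n : Type*} [Fintype n] [DecidableEq n]
    (A : Matrix n n ℂ) : Matrix n n ℂ :=
  if h : A.PosSemidef then
    (h.1.eigenvectorUnitary : Matrix n n ℂ) * diagonal ((↑) ∘ Real.sqrt ∘ h.1.eigenvalues) *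
      (star h.1.eigenvectorUnitary : Matrix n n ℂ) else 0

noncomputable def gm {n : Type*} [Fintype n] [DecidableEq n]
    (A B : Matrix n n ℂ) : Matrix n n ℂ :=
  msqrt A * msqrt ((msqrt A)⁻¹ * B * (msqrt A)⁻¹) * msqrt A

def IsDensity {n : Type*} [Fintype n] (ρ : Matrix n n ℂ) : Prop :=
  ρ.PosSemidef ∧ ρ.trace = 1

structure IsReverseTest {d m : ℕ} (ρ σ : Matrix (Fin d) (Fin d) ℂ)
    (R : Fin m → Matrix (Fin d) (Fin d) ℂ) (p q : Fin m → ℝ) : Prop where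
  states : ∀ x, IsDensity (R x)
  p_nonneg : ∀ x, 0 ≤ p x
  q_nonneg : ∀ x, 0 ≤ q x
  p_sum : ∑ x, p x = 1
  q_sum : ∑ x, q x = 1
  rho_eq : ∑ x, (p x : ℂ) • R x = ρ
  sigma_eq : ∑ x, (q x : ℂ) • R x = σ

noncomputable def Fmin {d : ℕ} (ρ σ : Matrix (Fin d) (Fin d) ℂ) : ℝ :=
  sSup {r : ℝ | ∃ (m : ℕ) (R : Fin m → Matrix (Fin d) (Fin d) ℂ) (p q : Fin m → ℝ),
    IsReverseTest ρ σ R p q ∧ r = ∑ x, Real.sqrt (p x * q x)}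

noncomputable def Dmax {d : ℕ} (ρ σ : Matrix (Fin d) (Fin d) ℂ) : ℝ :=
  sInf {r : ℝ | ∃ (m : ℕ) (R : Fin m → Matrix (Fin d) (Fin d) ℂ) (p q : Fin m → ℝ),
    IsReverseTest ρ σ R p q ∧ r = (∑ x, |p x - q x|) / 2}

noncomputable def choiMatrix {d e : ℕ}
    (Λ : Matrix (Fin d) (Fin d) ℂ →ₗ[ℂ] Matrix (Fin e) (Fin e) ℂ) :
    Matrix (Fin d × Fin e) (Fin d × Fin e) ℂ :=
  Matrix.of fun pr qr => Λ (Matrix.single pr.1 qr.1 1) pr.2 qr.2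

def IsCPTP {d e : ℕ}
    (Λ : Matrix (Fin d) (Fin d) ℂ →ₗ[ℂ] Matrix (Fin e) (Fin e) ℂ) : Prop :=
  (choiMatrix Λ).PosSemidef ∧ ∀ A, (Λ A).trace = A.trace

noncomputable def mcfc {n : Type*} [Fintype n] [DecidableEq n]
    (f : ℝ → ℝ) (A : Matrix n n ℂ) : Matrix n n ℂ :=
  if h : A.IsHermitian then h.cfc f else 0

def IsOperatorMonotoneOnNonneg (f : ℝ → ℝ) : Prop :=
  ∀ (d : ℕ) (A B : Matrix (Fin d) (Fin d) ℂ), A.PosSemidef → B.PosSemidef →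
    (B - A).PosSemidef → (mcfc f B - mcfc f A).PosSemidef

noncomputable def traceNorm {n : Type*} [Fintype n] [DecidableEq n]
    (A : Matrix n n ℂ) : ℝ :=
  ((msqrt (Aᴴ * A)).trace).re


open Matrix BigOperators
open scoped ComplexOrder Classical

section Helpers

variable {d : ℕ}

lemma vecMulVec_mulVec' (φ x : Fin d → ℂ) :
    Matrix.vecMulVec φ (star φ) *ᵥ x = (star φ ⬝ᵥ x) • φ := by
  ext i
  simp only [Matrix.mulVec, Matrix.vecMulVec_apply, dotProduct, Pi.smul_apply, smul_eq_mul,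
    Finset.sum_mul]
  refine Finset.sum_congr rfl fun j _ => by ring

lemma quad_vecMulVec (φ x : Fin d → ℂ) :
    star x ⬝ᵥ (Matrix.vecMulVec φ (star φ)) *ᵥ x = (star x ⬝ᵥ φ) * (star φ ⬝ᵥ x) := by
  rw [vecMulVec_mulVec', dotProduct_smul]
  ring_nf

lemma vecMulVec_herm (φ : Fin d → ℂ) :
    (Matrix.vecMulVec φ (star φ)).IsHermitian := by
  ext i j
  simp [Matrix.conjTranspose_apply, Matrix.vecMulVec_apply, mul_comm]

lemma trace_vecMulVec' (φ : Fin d → ℂ) :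
    (Matrix.vecMulVec φ (star φ)).trace = star φ ⬝ᵥ φ := by
  simp [Matrix.trace, Matrix.diag, Matrix.vecMulVec_apply, dotProduct, mul_comm]

lemma star_dot_comm (φ x : Fin d → ℂ) :
    star x ⬝ᵥ φ = starRingEnd ℂ (star φ ⬝ᵥ x) := by
  simp [dotProduct, map_sum, mul_comm]

lemma herm_quad {M : Matrix (Fin d) (Fin d) ℂ} (hM : M.IsHermitian) (y x : Fin d → ℂ) :
    star y ⬝ᵥ M *ᵥ x = star (M *ᵥ y) ⬝ᵥ x := by
  rw [star_mulVec, hM.eq, Matrix.dotProduct_mulVec]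

lemma psd_diag_nonneg {M : Matrix (Fin d) (Fin d) ℂ} (hM : M.PosSemidef) (i : Fin d) :
    0 ≤ M i i := by
  have h := hM.dotProduct_mulVec_nonneg (Pi.single i 1)
  simpa [Matrix.mulVec_single, dotProduct, Pi.single_apply, apply_ite] using h

lemma psd_trace_nonneg {M : Matrix (Fin d) (Fin d) ℂ} (hM : M.PosSemidef) :
    0 ≤ M.trace :=
  Finset.sum_nonneg fun i _ => psd_diag_nonneg hM i

lemma psd_trace_zero {M : Matrix (Fin d) (Fin d) ℂ} (hM : M.PosSemidef)
    (h : M.trace = 0) : M = 0 := by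
  have hdiag : ∀ i, M i i = 0 := by
    intro i
    have := (Finset.sum_eq_zero_iff_of_nonneg (fun i _ => psd_diag_nonneg hM i)).mp h
    exact this i (Finset.mem_univ i)
  have hcol : ∀ i, M *ᵥ Pi.single i 1 = 0 := by
    intro i
    rw [← hM.dotProduct_mulVec_zero_iff]
    simpa [Matrix.mulVec_single, dotProduct, Pi.single_apply, apply_ite] using hdiag i
  ext i j
  have := congrFun (hcol j) i
  simpa [Matrix.mulVec_single] using this

lemma psd_smul {M : Matrix (Fin d) (Fin d) ℂ} (hM : M.PosSemidef) {c : ℝ} (hc : 0 ≤ c) :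
    ((c : ℂ) • M).PosSemidef := by
  refine Matrix.PosSemidef.of_dotProduct_mulVec_nonneg ?_ ?_
  · rw [Matrix.IsHermitian, Matrix.conjTranspose_smul, hM.1.eq]
    congr 1
    simp [Complex.conj_ofReal]
  · intro x
    rw [Matrix.smul_mulVec, dotProduct_smul, smul_eq_mul]
    exact mul_nonneg (by exact_mod_cast Complex.zero_le_real.mpr hc) (hM.dotProduct_mulVec_nonneg x)


variable {d : ℕ} {ρ : Matrix (Fin d) (Fin d) ℂ} {φ : Fin d → ℂ}

lemma star_dot_comm' (φ x : Fin d → ℂ) :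
    star x ⬝ᵥ φ = starRingEnd ℂ (star φ ⬝ᵥ x) := by
  simp [dotProduct, map_sum, mul_comm]

lemma herm_quad' {M : Matrix (Fin d) (Fin d) ℂ} (hM : M.IsHermitian) (y x : Fin d → ℂ) :
    star y ⬝ᵥ M *ᵥ x = star (M *ᵥ y) ⬝ᵥ x := by
  rw [star_mulVec, hM.eq, Matrix.dotProduct_mulVec]

lemma rho_inv_mulVec (hρ : ρ.PosDef) : ρ *ᵥ (ρ⁻¹ *ᵥ φ) = φ := by
  rw [Matrix.mulVec_mulVec, Matrix.mul_nonsing_inv _ hρ.det_pos.ne'.isUnit, Matrix.one_mulVec]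

lemma aC_pos (hρ : ρ.PosDef) (hφ : star φ ⬝ᵥ φ = 1) :
    0 < star φ ⬝ᵥ ρ⁻¹ *ᵥ φ := by
  have hφ0 : φ ≠ 0 := by
    intro h
    rw [h] at hφ
    simp at hφ
  exact hρ.inv.dotProduct_mulVec_pos hφ0

lemma aC_eq (hρ : ρ.PosDef) (hφ : star φ ⬝ᵥ φ = 1) :
    star φ ⬝ᵥ ρ⁻¹ *ᵥ φ = ((star φ ⬝ᵥ ρ⁻¹ *ᵥ φ).re : ℂ) := by
  have h := aC_pos hρ hφ
  rw [Complex.lt_def] at h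
  exact Complex.ext rfl (by simp [← h.2])

/-- Cauchy–Schwarz w.r.t. ρ. -/
lemma keyCS (hρ : ρ.PosDef) (hφ : star φ ⬝ᵥ φ = 1) (x : Fin d → ℂ) :
    (star x ⬝ᵥ φ) * (star φ ⬝ᵥ x) ≤
      (star φ ⬝ᵥ ρ⁻¹ *ᵥ φ) * (star x ⬝ᵥ ρ *ᵥ x) := by
  set y : Fin d → ℂ := ρ⁻¹ *ᵥ φ with hy
  set aC : ℂ := star φ ⬝ᵥ y with haC
  set t : ℂ := star φ ⬝ᵥ x with ht
  have hρy : ρ *ᵥ y = φ := rho_inv_mulVec hρ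
  have hstar_aC : starRingEnd ℂ aC = aC := by
    have := aC_eq hρ hφ
    rw [haC, hy, this, Complex.conj_ofReal]
  have hyx : star y ⬝ᵥ ρ *ᵥ x = t := by
    rw [herm_quad' hρ.isHermitian, hρy, ht]
  have hyφ : star y ⬝ᵥ φ = aC := by
    rw [star_dot_comm' φ y, ← haC, hstar_aC]
  have hxφ : star x ⬝ᵥ φ = starRingEnd ℂ t := by rw [star_dot_comm', ht]
  have h0 := hρ.posSemidef.dotProduct_mulVec_nonneg (aC • x - t • y)
  have hexp : star (aC • x - t • y) ⬝ᵥ ρ *ᵥ (aC • x - t • y)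
      = aC * (aC * (star x ⬝ᵥ ρ *ᵥ x) - starRingEnd ℂ t * t) := by
    have hstar : star (aC • x - t • y) = starRingEnd ℂ aC • star x - starRingEnd ℂ t • star y := by
      ext i
      simp only [Pi.star_apply, Pi.sub_apply, Pi.smul_apply, smul_eq_mul, star_sub, star_mul',
        starRingEnd_apply]
    rw [hstar, Matrix.mulVec_sub, Matrix.mulVec_smul, Matrix.mulVec_smul, hρy]
    simp only [dotProduct_sub, sub_dotProduct, smul_dotProduct, dotProduct_smul, smul_eq_mul,
      hstar_aC]
    rw [hyx, hyφ, hxφ]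
    ring
  rw [hexp] at h0
  have haCpos : 0 < aC := aC_pos hρ hφ
  have hainv : (0:ℂ) ≤ aC⁻¹ := by
    rw [haC, hy, aC_eq hρ hφ, ← Complex.ofReal_inv]
    refine Complex.zero_le_real.mpr (inv_nonneg.mpr ?_)
    have := aC_pos hρ hφ
    rw [Complex.lt_def] at this
    simpa using this.1.le
  have h1 : (0:ℂ) ≤ aC⁻¹ * (aC * (aC * (star x ⬝ᵥ ρ *ᵥ x) - starRingEnd ℂ t * t)) :=
    mul_nonneg hainv h0
  rw [← mul_assoc, inv_mul_cancel₀ (ne_of_gt haCpos), one_mul] at h1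
  rw [hxφ]
  have := sub_nonneg.mp h1
  calc starRingEnd ℂ t * t ≤ aC * (star x ⬝ᵥ ρ *ᵥ x) := this
    _ = (star φ ⬝ᵥ ρ⁻¹ *ᵥ φ) * (star x ⬝ᵥ ρ *ᵥ x) := by rw [haC, hy]


section Helpers3
variable {d : ℕ} {ρ : Matrix (Fin d) (Fin d) ℂ} {φ : Fin d → ℂ}

lemma smul_herm {c : ℝ} {M : Matrix (Fin d) (Fin d) ℂ} (hM : M.IsHermitian) :
    ((c : ℂ) • M).IsHermitian := by
  rw [Matrix.IsHermitian, Matrix.conjTranspose_smul, hM.eq]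
  congr 1
  simp [Complex.conj_ofReal]

lemma quad_sub_smul (M : Matrix (Fin d) (Fin d) ℂ) (c : ℂ) (x : Fin d → ℂ) :
    star x ⬝ᵥ (ρ - c • M) *ᵥ x
      = star x ⬝ᵥ ρ *ᵥ x - c * (star x ⬝ᵥ M *ᵥ x) := by
  rw [Matrix.sub_mulVec, dotProduct_sub, Matrix.smul_mulVec, dotProduct_smul, smul_eq_mul]

lemma a_pos (hρ : ρ.PosDef) (hφ : star φ ⬝ᵥ φ = 1) :
    0 < (star φ ⬝ᵥ ρ⁻¹ *ᵥ φ).re := by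
  have h := aC_pos hρ hφ
  rw [Complex.lt_def] at h
  simpa using h.1

lemma psd_sub_cP (hρ : ρ.PosDef) (hφ : star φ ⬝ᵥ φ = 1) :
    (ρ - ((((star φ ⬝ᵥ ρ⁻¹ *ᵥ φ).re)⁻¹ : ℝ) : ℂ) • Matrix.vecMulVec φ (star φ)).PosSemidef := by
  set a : ℝ := (star φ ⬝ᵥ ρ⁻¹ *ᵥ φ).re with ha
  have hapos : 0 < a := a_pos hρ hφ
  refine Matrix.PosSemidef.of_dotProduct_mulVec_nonneg ?_ ?_
  · exact hρ.isHermitian.sub (smul_herm (vecMulVec_herm φ))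
  · intro x
    rw [quad_sub_smul, quad_vecMulVec]
    have hCS := keyCS hρ hφ x
    rw [aC_eq hρ hφ, ← ha] at hCS
    have h1 : (0:ℂ) ≤ ((a⁻¹ : ℝ) : ℂ) :=
      Complex.zero_le_real.mpr (inv_nonneg.mpr hapos.le)
    have h2 : (0:ℂ) ≤ ((a⁻¹ : ℝ) : ℂ) *
        ((a : ℂ) * (star x ⬝ᵥ ρ *ᵥ x) - (star x ⬝ᵥ φ) * (star φ ⬝ᵥ x)) :=
      mul_nonneg h1 (sub_nonneg.mpr hCS)
    have h3 : ((a⁻¹ : ℝ) : ℂ) * ((a : ℂ) * (star x ⬝ᵥ ρ *ᵥ x) - (star x ⬝ᵥ φ) * (star φ ⬝ᵥ x))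
        = star x ⬝ᵥ ρ *ᵥ x - ((a⁻¹ : ℝ) : ℂ) * ((star x ⬝ᵥ φ) * (star φ ⬝ᵥ x)) := by
      have : ((a⁻¹ : ℝ) : ℂ) * (a : ℂ) = 1 := by
        rw [← Complex.ofReal_mul, inv_mul_cancel₀ hapos.ne']
        simp
      rw [mul_sub, ← mul_assoc, this, one_mul]
    rw [h3] at h2
    exact h2

lemma max_c (hρ : ρ.PosDef) (hφ : star φ ⬝ᵥ φ = 1) {t : ℝ}
    (h : (ρ - (t : ℂ) • Matrix.vecMulVec φ (star φ)).PosSemidef) :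
    t ≤ ((star φ ⬝ᵥ ρ⁻¹ *ᵥ φ).re)⁻¹ := by
  set a : ℝ := (star φ ⬝ᵥ ρ⁻¹ *ᵥ φ).re with ha
  have hapos : 0 < a := a_pos hρ hφ
  set y : Fin d → ℂ := ρ⁻¹ *ᵥ φ with hy
  have hρy : ρ *ᵥ y = φ := rho_inv_mulVec hρ
  have haC : star φ ⬝ᵥ y = (a : ℂ) := by rw [hy, ha]; exact aC_eq hρ hφ
  have hyφ : star y ⬝ᵥ φ = (a : ℂ) := by
    rw [star_dot_comm' φ y, haC, Complex.conj_ofReal]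
  have hyρy : star y ⬝ᵥ ρ *ᵥ y = (a : ℂ) := by
    rw [herm_quad' hρ.isHermitian, hρy, haC]
  have h0 := h.dotProduct_mulVec_nonneg y
  rw [quad_sub_smul, quad_vecMulVec, hyρy, hyφ, haC] at h0
  have hr : (0:ℂ) ≤ ((a - t * (a * a) : ℝ) : ℂ) := by push_cast; exact h0
  rw [Complex.zero_le_real] at hr
  have h1 : t * a ≤ 1 := by nlinarith
  calc t = t * a * a⁻¹ := by field_simp
    _ ≤ 1 * a⁻¹ := mul_le_mul_of_nonneg_right h1 (inv_nonneg.mpr hapos.le)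
    _ = a⁻¹ := one_mul _

lemma psd_sum {m : ℕ} (s : Finset (Fin m)) (f : Fin m → Matrix (Fin d) (Fin d) ℂ)
    (h : ∀ x ∈ s, (f x).PosSemidef) : (∑ x ∈ s, f x).PosSemidef :=
  Finset.sum_induction f _ (fun _ _ ha hb => ha.add hb) Matrix.PosSemidef.zero h

end Helpers3
section Helpers4
variable {d : ℕ} {ρ : Matrix (Fin d) (Fin d) ℂ} {φ : Fin d → ℂ}

lemma sum_mulVec' {m : ℕ} (f : Fin m → Matrix (Fin d) (Fin d) ℂ) (v : Fin d → ℂ) :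
    (∑ i, f i) *ᵥ v = ∑ i, f i *ᵥ v := by
  ext k
  simp only [Matrix.mulVec, dotProduct, Finset.sum_apply, Matrix.sum_apply, Finset.sum_mul]
  exact Finset.sum_comm

lemma quad_sum {m : ℕ} (c : Fin m → ℂ) (f : Fin m → Matrix (Fin d) (Fin d) ℂ) (v : Fin d → ℂ) :
    star v ⬝ᵥ (∑ i, c i • f i) *ᵥ v = ∑ i, c i * (star v ⬝ᵥ f i *ᵥ v) := by
  rw [sum_mulVec']
  simp only [dotProduct, Finset.sum_apply, Pi.smul_apply, smul_eq_mul, Finset.mul_sum,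
    Matrix.smul_mulVec]
  rw [Finset.sum_comm]
  refine Finset.sum_congr rfl fun i _ => Finset.sum_congr rfl fun j _ => by ring

lemma pure_decomp {m : ℕ} {R : Fin m → Matrix (Fin d) (Fin d) ℂ} {p q : Fin m → ℝ}
    (hφ : star φ ⬝ᵥ φ = 1)
    (hT : IsReverseTest ρ (Matrix.vecMulVec φ (star φ)) R p q)
    (x : Fin m) (hqx : q x ≠ 0) : R x = Matrix.vecMulVec φ (star φ) := by
  have hherm : (R x).IsHermitian := (hT.states x).1.1
  have hv0 : ∀ v, star φ ⬝ᵥ v = 0 → R x *ᵥ v = 0 := by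
    intro v hv
    have hsum : ∑ i, (q i : ℂ) * (star v ⬝ᵥ R i *ᵥ v) = 0 := by
      have h1 := congrArg (fun M => star v ⬝ᵥ M *ᵥ v) hT.sigma_eq
      rw [quad_sum, quad_vecMulVec, hv, mul_zero] at h1
      exact h1
    have hterm : (q x : ℂ) * (star v ⬝ᵥ R x *ᵥ v) = 0 := by
      have := (Finset.sum_eq_zero_iff_of_nonneg (fun i _ =>
        mul_nonneg (Complex.zero_le_real.mpr (hT.q_nonneg i)) ((hT.states i).1.dotProduct_mulVec_nonneg v))).mp hsum
      exact this x (Finset.mem_univ x)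
    have hq : (q x : ℂ) ≠ 0 := by exact_mod_cast hqx
    have hquad : star v ⬝ᵥ R x *ᵥ v = 0 := by
      rcases mul_eq_zero.mp hterm with h | h
      · exact absurd h hq
      · exact h
    exact ((hT.states x).1.dotProduct_mulVec_zero_iff v).mp hquad
  set w : Fin d → ℂ := R x *ᵥ φ with hw
  set μ : ℂ := star φ ⬝ᵥ w with hμ
  have hweq : w = μ • φ := by
    set v : Fin d → ℂ := w - μ • φ with hv
    have hvφ : star φ ⬝ᵥ v = 0 := by
      rw [hv, dotProduct_sub, dotProduct_smul, hφ, smul_eq_mul, mul_one, ← hμ, sub_self]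
    have h1 : star v ⬝ᵥ w = 0 := by
      rw [hw, herm_quad' hherm, hv0 v hvφ]
      simp
    have hvφ2 : star v ⬝ᵥ φ = 0 := by
      rw [star_dot_comm' φ v, hvφ, map_zero]
    have h2 : star v ⬝ᵥ v = 0 := by
      have : star v ⬝ᵥ v = star v ⬝ᵥ w - μ * (star v ⬝ᵥ φ) := by
        rw [hv]
        rw [dotProduct_sub, dotProduct_smul, smul_eq_mul]
      rw [this, h1, hvφ2, mul_zero, sub_zero]
    have hv0' : v = 0 := dotProduct_star_self_eq_zero.mp h2
    have := sub_eq_zero.mp (hv ▸ hv0')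
    exact this
  have hmv : ∀ z, R x *ᵥ z = μ • (Matrix.vecMulVec φ (star φ) *ᵥ z) := by
    intro z
    set u : Fin d → ℂ := z - (star φ ⬝ᵥ z) • φ with hu
    have huφ : star φ ⬝ᵥ u = 0 := by
      rw [hu, dotProduct_sub, dotProduct_smul, hφ, smul_eq_mul, mul_one, sub_self]
    have hz : z = u + (star φ ⬝ᵥ z) • φ := by rw [hu]; ring_nf
    calc R x *ᵥ z = R x *ᵥ (u + (star φ ⬝ᵥ z) • φ) := by rw [← hz]
      _ = R x *ᵥ u + (star φ ⬝ᵥ z) • (R x *ᵥ φ) := by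
          rw [Matrix.mulVec_add, Matrix.mulVec_smul]
      _ = (star φ ⬝ᵥ z) • (μ • φ) := by rw [hv0 u huφ, ← hw, hweq, zero_add]
      _ = μ • (Matrix.vecMulVec φ (star φ) *ᵥ z) := by
          rw [vecMulVec_mulVec', smul_comm]
  have hRxP : R x = μ • Matrix.vecMulVec φ (star φ) := by
    ext i j
    have := congrFun (hmv (Pi.single j 1)) i
    simpa [Matrix.mulVec_single, Matrix.smul_apply, smul_eq_mul] using this
  have hμ1 : μ = 1 := by
    have htr := (hT.states x).2
    rw [hRxP, Matrix.trace_smul, trace_vecMulVec', hφ, smul_eq_mul, mul_one] at htr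
    exact htr
  rw [hRxP, hμ1, one_smul]

end Helpers4

theorem stmt9' {d : ℕ} (ρ : Matrix (Fin d) (Fin d) ℂ)
    (hρ : ρ.PosDef) (hρ1 : ρ.trace = 1)
    (φ : Fin d → ℂ) (hφ : star φ ⬝ᵥ φ = 1) :
    Fmin ρ (Matrix.vecMulVec φ (star φ)) =
      1 / Real.sqrt ((star φ ⬝ᵥ ρ⁻¹ *ᵥ φ).re) := by
  classical
  set P := Matrix.vecMulVec φ (star φ) with hP
  set a : ℝ := (star φ ⬝ᵥ ρ⁻¹ *ᵥ φ).re with ha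
  have hapos : 0 < a := a_pos hρ hφ
  set c : ℝ := a⁻¹ with hc
  have hcpos : 0 < c := inv_pos.mpr hapos
  have hPSD : (ρ - ((c : ℝ) : ℂ) • P).PosSemidef := psd_sub_cP hρ hφ
  have htrP : P.trace = 1 := by rw [hP, trace_vecMulVec', hφ]
  have htr : (ρ - ((c : ℝ) : ℂ) • P).trace = ((1 - c : ℝ) : ℂ) := by
    rw [Matrix.trace_sub, Matrix.trace_smul, htrP, smul_eq_mul, mul_one, hρ1]
    push_cast
    ring
  have hc1 : c ≤ 1 := by
    have h0 := psd_trace_nonneg hPSD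
    rw [htr, Complex.zero_le_real] at h0
    linarith
  have hPpsd : P.PosSemidef := by
    refine Matrix.PosSemidef.of_dotProduct_mulVec_nonneg (vecMulVec_herm φ) fun x => ?_
    rw [hP, quad_vecMulVec, star_dot_comm']
    rw [starRingEnd_apply]
    exact star_mul_self_nonneg _
  -- membership : the optimal reverse test
  set R₂ : Matrix (Fin d) (Fin d) ℂ :=
    if 1 - c = 0 then P else (((1 - c)⁻¹ : ℝ) : ℂ) • (ρ - ((c : ℝ) : ℂ) • P) with hR₂
  have hR₂dens : IsDensity R₂ := by
    rw [hR₂]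
    split_ifs with h
    · exact ⟨hPpsd, htrP⟩
    · have h1c : 0 < 1 - c := lt_of_le_of_ne (by linarith) (Ne.symm h)
      refine ⟨psd_smul hPSD (inv_nonneg.mpr h1c.le), ?_⟩
      rw [Matrix.trace_smul, htr, smul_eq_mul, ← Complex.ofReal_mul,
        inv_mul_cancel₀ h]
      simp
  have hT : IsReverseTest ρ P ![P, R₂] ![c, 1 - c] ![(1 : ℝ), 0] := by
    constructor
    · intro x
      fin_cases x
      · exact ⟨hPpsd, htrP⟩
      · exact hR₂dens
    · intro x
      fin_cases x
      · exact hcpos.le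
      · show (0:ℝ) ≤ 1 - c
        linarith
    · intro x
      fin_cases x
      · simp
      · simp
    · simp
    · simp
    · rw [Fin.sum_univ_two]
      simp only [Matrix.cons_val_zero, Matrix.cons_val_one, Matrix.head_cons]
      rw [hR₂]
      split_ifs with h
      · have hc1' : c = 1 := by linarith
        have hzero : ρ - ((c : ℝ) : ℂ) • P = 0 := by
          apply psd_trace_zero hPSD
          rw [htr, h]
          simp
        have hρP : ρ = ((c : ℝ) : ℂ) • P := by
          have := sub_eq_zero.mp hzero
          exact this
        rw [hρP, hc1']
        norm_num
      · rw [smul_smul, ← Complex.ofReal_mul, mul_inv_cancel₀ h]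
        simp
    · rw [Fin.sum_univ_two]
      simp
  have hval : Real.sqrt c = ∑ x, Real.sqrt ((![c, 1 - c] x) * (![(1 : ℝ), 0] x)) := by
    rw [Fin.sum_univ_two]
    simp
  have hmem : Real.sqrt c ∈ {r : ℝ | ∃ (m : ℕ) (R : Fin m → Matrix (Fin d) (Fin d) ℂ)
      (p q : Fin m → ℝ), IsReverseTest ρ P R p q ∧ r = ∑ x, Real.sqrt (p x * q x)} :=
    ⟨2, ![P, R₂], ![c, 1 - c], ![(1 : ℝ), 0], hT, hval⟩
  -- upper bound
  have hub : ∀ r ∈ {r : ℝ | ∃ (m : ℕ) (R : Fin m → Matrix (Fin d) (Fin d) ℂ)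
      (p q : Fin m → ℝ), IsReverseTest ρ P R p q ∧ r = ∑ x, Real.sqrt (p x * q x)},
      r ≤ Real.sqrt c := by
    rintro r ⟨m, R, p, q, hTst, rfl⟩
    set F : Finset (Fin m) := Finset.univ.filter (fun x => q x ≠ 0) with hF
    have hRP : ∀ x ∈ F, R x = P := by
      intro x hx
      rw [hF, Finset.mem_filter] at hx
      exact pure_decomp hφ hTst x hx.2
    set t : ℝ := ∑ x ∈ F, p x with ht
    have hsplit' : ρ = ((t : ℝ) : ℂ) • P + ∑ x ∈ Fᶜ, (p x : ℂ) • R x := by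
      rw [← hTst.rho_eq, ← Finset.sum_add_sum_compl F]
      congr 1
      rw [Finset.sum_congr rfl (fun x hx => by rw [hRP x hx]), ← Finset.sum_smul, ht]
      push_cast
      rfl
    have hpsd2 : (ρ - ((t : ℝ) : ℂ) • P).PosSemidef := by
      rw [hsplit']
      rw [add_sub_cancel_left]
      exact psd_sum _ _ (fun x _ => psd_smul ((hTst.states x).1) (hTst.p_nonneg x))
    have htc : t ≤ c := max_c hρ hφ hpsd2
    have hq1 : ∑ x ∈ F, q x = 1 := by
      rw [← hTst.q_sum]
      apply Finset.sum_subset (Finset.subset_univ F)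
      intro x _ hx
      rw [hF, Finset.mem_filter] at hx
      push_neg at hx
      exact hx (Finset.mem_univ x)
    have hsum_eq : ∑ x, Real.sqrt (p x * q x) = ∑ x ∈ F, Real.sqrt (p x * q x) := by
      symm
      apply Finset.sum_subset (Finset.subset_univ F)
      intro x _ hx
      rw [hF, Finset.mem_filter] at hx
      push_neg at hx
      rw [hx (Finset.mem_univ x), mul_zero, Real.sqrt_zero]
    rw [hsum_eq]
    have hCS := Finset.sum_sq_le_sum_mul_sum_of_sq_eq_mul F
      (r := fun x => Real.sqrt (p x * q x)) (f := p) (g := q)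
      (fun i _ => hTst.p_nonneg i) (fun i _ => hTst.q_nonneg i)
      (fun i _ => Real.sq_sqrt (mul_nonneg (hTst.p_nonneg i) (hTst.q_nonneg i)))
    rw [hq1, mul_one, ← ht] at hCS
    have hnn : 0 ≤ ∑ x ∈ F, Real.sqrt (p x * q x) :=
      Finset.sum_nonneg fun i _ => Real.sqrt_nonneg _
    calc ∑ x ∈ F, Real.sqrt (p x * q x)
        = Real.sqrt ((∑ x ∈ F, Real.sqrt (p x * q x)) ^ 2) := (Real.sqrt_sq hnn).symm
      _ ≤ Real.sqrt c := Real.sqrt_le_sqrt (hCS.trans htc)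
  have hsup : Fmin ρ P = Real.sqrt c := by
    unfold Fmin
    exact le_antisymm (csSup_le ⟨_, hmem⟩ hub)
      (le_csSup ⟨Real.sqrt c, fun r hr => hub r hr⟩ hmem)
  rw [hsup, hc, Real.sqrt_inv, one_div]

theorem stmt9 {d : ℕ} (ρ : Matrix (Fin d) (Fin d) ℂ)
    (hρ : ρ.PosDef) (hρ1 : ρ.trace = 1)
    (φ : Fin d → ℂ) (hφ : star φ ⬝ᵥ φ = 1) :
    Fmin ρ (Matrix.vecMulVec φ (star φ)) =
      1 / Real.sqrt ((star φ ⬝ᵥ ρ⁻¹ *ᵥ φ).re) := by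
  exact stmt9' ρ hρ hρ1 φ hφ
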